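/- arXiv:2510.09123 — 2 statements merged into one kernel-verified Lean document; each statement's English description precedes it below -/
import Mathlib

section
/- Let X, Y be independent integrable real random variables with CDFs F and G, let X' be an independent copy of X and Y' an independent copy of Y, with X, X', Y, Y' mutually independent. Then ∫_ℝ (F(x) - G(x))² dx = E|X - Y| - (1/2)E|X - X'| - (1/2)E|Y - Y'|. -/
open MeasureTheory ProbabilityTheory Set

namespace CramerAux

lemma sq_ite_eq_indicator (a b x : ℝ) :
    ((if a ≤ x then (1:ℝ) else 0) - (if b ≤ x then 1 else 0)) ^ 2
      = (Set.Ico (min a b) (max a b)).indicator (1 : ℝ → ℝ) x := by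
  rcases le_total a b with hab | hab
  · rw [min_eq_left hab, max_eq_right hab]
    by_cases h1 : a ≤ x <;> by_cases h2 : b ≤ x
    · simp [Set.indicator_apply, Set.mem_Ico, h1, h2, not_lt.mpr h2]
    · simp [Set.indicator_apply, Set.mem_Ico, h1, h2, not_le.mp h2]
    · exact absurd (hab.trans h2) h1
    · simp [Set.indicator_apply, Set.mem_Ico, h1, h2]
  · rw [min_eq_right hab, max_eq_left hab]
    by_cases h1 : a ≤ x <;> by_cases h2 : b ≤ x
    · simp [Set.indicator_apply, Set.mem_Ico, h1, h2, not_lt.mpr h1]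
    · exact absurd (hab.trans h1) h2
    · simp [Set.indicator_apply, Set.mem_Ico, h1, h2, not_le.mp h1]
    · simp [Set.indicator_apply, Set.mem_Ico, h1, h2]

lemma integral_sq_ite (a b : ℝ) :
    ∫ x : ℝ, ((if a ≤ x then (1:ℝ) else 0) - (if b ≤ x then 1 else 0)) ^ 2 = |a - b| := by
  simp only [sq_ite_eq_indicator]
  rw [MeasureTheory.integral_indicator_one measurableSet_Ico]
  rw [measureReal_def, Real.volume_Ico, ENNReal.toReal_ofReal (sub_nonneg.2 min_le_max)]
  rw [max_sub_min_eq_abs, abs_sub_comm]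

variable {Ω : Type*} [MeasurableSpace Ω] {μ : Measure Ω} [IsProbabilityMeasure μ]
variable {A B : Ω → ℝ}

lemma cf_measurable (hA : Measurable A) (hB : Measurable B) :
    Measurable (fun p : Ω × ℝ =>
      ((if A p.1 ≤ p.2 then (1:ℝ) else 0) - (if B p.1 ≤ p.2 then 1 else 0)) ^ 2) := by
  have hS : MeasurableSet {p : Ω × ℝ | A p.1 ≤ p.2} :=
    measurableSet_le (hA.comp measurable_fst) measurable_snd
  have hT : MeasurableSet {p : Ω × ℝ | B p.1 ≤ p.2} :=
    measurableSet_le (hB.comp measurable_fst) measurable_snd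
  exact ((Measurable.ite hS measurable_const measurable_const).sub
    (Measurable.ite hT measurable_const measurable_const)).pow_const 2

lemma cf_integrable (hA : Measurable A) (hB : Measurable B)
    (hAint : Integrable A μ) (hBint : Integrable B μ) :
    Integrable (fun p : Ω × ℝ =>
      ((if A p.1 ≤ p.2 then (1:ℝ) else 0) - (if B p.1 ≤ p.2 then 1 else 0)) ^ 2)
      (μ.prod volume) := by
  rw [integrable_prod_iff (cf_measurable hA hB).aestronglyMeasurable]
  constructor
  · refine Filter.Eventually.of_forall fun ω => ?_
    simp only [sq_ite_eq_indicator]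
    exact (integrable_indicator_iff measurableSet_Ico).2
      (integrableOn_const measure_Ico_lt_top.ne)
  · have : (fun ω => ∫ x : ℝ,
        ‖((if A ω ≤ x then (1:ℝ) else 0) - (if B ω ≤ x then 1 else 0)) ^ 2‖)
        = fun ω => |A ω - B ω| := by
      funext ω
      rw [← integral_sq_ite (A ω) (B ω)]
      congr 1; funext x
      rw [Real.norm_eq_abs, abs_of_nonneg (sq_nonneg _)]
    rw [this]
    exact (hAint.sub hBint).abs

lemma exp_abs_eq (hA : Measurable A) (hB : Measurable B)
    (hAint : Integrable A μ) (hBint : Integrable B μ) :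
    ∫ ω, |A ω - B ω| ∂μ
      = ∫ x : ℝ, ∫ ω, ((if A ω ≤ x then (1:ℝ) else 0) - (if B ω ≤ x then 1 else 0)) ^ 2 ∂μ := by
  have h := integral_integral_swap (f := fun ω x =>
      ((if A ω ≤ x then (1:ℝ) else 0) - (if B ω ≤ x then 1 else 0)) ^ 2)
      (cf_integrable hA hB hAint hBint)
  rw [← h]
  congr 1; funext ω
  exact (integral_sq_ite (A ω) (B ω)).symm

lemma h_integrable (hA : Measurable A) (hB : Measurable B)
    (hAint : Integrable A μ) (hBint : Integrable B μ) :
    Integrable (fun x : ℝ =>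
      ∫ ω, ((if A ω ≤ x then (1:ℝ) else 0) - (if B ω ≤ x then 1 else 0)) ^ 2 ∂μ) volume :=
  (cf_integrable hA hB hAint hBint).integral_prod_right

lemma inner_exp (hA : Measurable A) (hB : Measurable B) (hAB : IndepFun A B μ) (x : ℝ) :
    ∫ ω, ((if A ω ≤ x then (1:ℝ) else 0) - (if B ω ≤ x then 1 else 0)) ^ 2 ∂μ
      = (μ {ω | A ω ≤ x}).toReal + (μ {ω | B ω ≤ x}).toReal
        - 2 * ((μ {ω | A ω ≤ x}).toReal * (μ {ω | B ω ≤ x}).toReal) := by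
  have hS : MeasurableSet (A ⁻¹' Set.Iic x) := hA measurableSet_Iic
  have hT : MeasurableSet (B ⁻¹' Set.Iic x) := hB measurableSet_Iic
  have hptw : ∀ ω, ((if A ω ≤ x then (1:ℝ) else 0) - (if B ω ≤ x then 1 else 0)) ^ 2
      = (A ⁻¹' Set.Iic x).indicator (1 : Ω → ℝ) ω
        + (B ⁻¹' Set.Iic x).indicator (1 : Ω → ℝ) ω
        - 2 * ((A ⁻¹' Set.Iic x) ∩ (B ⁻¹' Set.Iic x)).indicator (1 : Ω → ℝ) ω := by
    intro ω
    by_cases h1 : A ω ≤ x <;> by_cases h2 : B ω ≤ x <;>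
      simp [Set.indicator_apply, h1, h2] <;> ring
  simp only [hptw]
  have i1 : Integrable ((A ⁻¹' Set.Iic x).indicator (1 : Ω → ℝ)) μ :=
    (integrable_const (1:ℝ)).indicator hS
  have i2 : Integrable ((B ⁻¹' Set.Iic x).indicator (1 : Ω → ℝ)) μ :=
    (integrable_const (1:ℝ)).indicator hT
  have i3 : Integrable (((A ⁻¹' Set.Iic x) ∩ (B ⁻¹' Set.Iic x)).indicator (1 : Ω → ℝ)) μ :=
    (integrable_const (1:ℝ)).indicator (hS.inter hT)
  have i12 : Integrable (fun ω => (A ⁻¹' Set.Iic x).indicator (1 : Ω → ℝ) ω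
      + (B ⁻¹' Set.Iic x).indicator (1 : Ω → ℝ) ω) μ := i1.add i2
  have i3' : Integrable (fun ω =>
      2 * ((A ⁻¹' Set.Iic x) ∩ (B ⁻¹' Set.Iic x)).indicator (1 : Ω → ℝ) ω) μ := i3.const_mul 2
  rw [integral_sub i12 i3', integral_add i1 i2, integral_const_mul _ _,
    integral_indicator_one hS, integral_indicator_one hT, integral_indicator_one (hS.inter hT)]
  have hmul := hAB.measure_inter_preimage_eq_mul (Set.Iic x) (Set.Iic x)
    measurableSet_Iic measurableSet_Iic
  simp only [measureReal_def]
  rw [hmul, ENNReal.toReal_mul]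
  rfl

end CramerAux

open CramerAux in
theorem cramer_distance_eq_energy {Ω : Type*} [MeasurableSpace Ω]
    (μ : Measure Ω) [IsProbabilityMeasure μ]
    (X X' Y Y' : Ω → ℝ)
    (hX : Measurable X) (hX' : Measurable X') (hY : Measurable Y) (hY' : Measurable Y')
    (hXint : Integrable X μ) (hYint : Integrable Y μ)
    (hXid : IdentDistrib X X' μ μ) (hYid : IdentDistrib Y Y' μ μ)
    (hind : iIndepFun ![X, X', Y, Y'] μ) :
    ∫ x : ℝ, ((μ {ω | X ω ≤ x}).toReal - (μ {ω | Y ω ≤ x}).toReal) ^ 2 =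
      (∫ ω, |X ω - Y ω| ∂μ)
        - (1 / 2) * (∫ ω, |X ω - X' ω| ∂μ)
        - (1 / 2) * (∫ ω, |Y ω - Y' ω| ∂μ) := by
  have hX'int : Integrable X' μ := hXid.integrable_iff.1 hXint
  have hY'int : Integrable Y' μ := hYid.integrable_iff.1 hYint
  have hXY : IndepFun X Y μ := by
    have := hind.indepFun (i := 0) (j := 2) (by decide)
    simpa using this
  have hXX' : IndepFun X X' μ := by
    have := hind.indepFun (i := 0) (j := 1) (by decide)
    simpa using this
  have hYY' : IndepFun Y Y' μ := by
    have := hind.indepFun (i := 2) (j := 3) (by decide)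
    simpa using this
  have hFX' : ∀ x : ℝ, μ {ω | X' ω ≤ x} = μ {ω | X ω ≤ x} := by
    intro x
    have h1 : μ {ω | X' ω ≤ x} = (μ.map X') (Set.Iic x) := by
      rw [Measure.map_apply hX' measurableSet_Iic]; rfl
    have h2 : μ {ω | X ω ≤ x} = (μ.map X) (Set.Iic x) := by
      rw [Measure.map_apply hX measurableSet_Iic]; rfl
    rw [h1, h2, hXid.map_eq]
  have hFY' : ∀ x : ℝ, μ {ω | Y' ω ≤ x} = μ {ω | Y ω ≤ x} := by
    intro x
    have h1 : μ {ω | Y' ω ≤ x} = (μ.map Y') (Set.Iic x) := by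
      rw [Measure.map_apply hY' measurableSet_Iic]; rfl
    have h2 : μ {ω | Y ω ≤ x} = (μ.map Y) (Set.Iic x) := by
      rw [Measure.map_apply hY measurableSet_Iic]; rfl
    rw [h1, h2, hYid.map_eq]
  set h1 : ℝ → ℝ := fun x =>
    ∫ ω, ((if X ω ≤ x then (1:ℝ) else 0) - (if Y ω ≤ x then 1 else 0)) ^ 2 ∂μ with hh1
  set h2 : ℝ → ℝ := fun x =>
    ∫ ω, ((if X ω ≤ x then (1:ℝ) else 0) - (if X' ω ≤ x then 1 else 0)) ^ 2 ∂μ with hh2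
  set h3 : ℝ → ℝ := fun x =>
    ∫ ω, ((if Y ω ≤ x then (1:ℝ) else 0) - (if Y' ω ≤ x then 1 else 0)) ^ 2 ∂μ with hh3
  have ih1 : Integrable h1 volume := h_integrable hX hY hXint hYint
  have ih2 : Integrable h2 volume := h_integrable hX hX' hXint hX'int
  have ih3 : Integrable h3 volume := h_integrable hY hY' hYint hY'int
  have hpt : ∀ x : ℝ, ((μ {ω | X ω ≤ x}).toReal - (μ {ω | Y ω ≤ x}).toReal) ^ 2
      = h1 x - (1/2) * h2 x - (1/2) * h3 x := by
    intro x
    rw [hh1, hh2, hh3]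
    simp only
    rw [inner_exp hX hY hXY x, inner_exp hX hX' hXX' x, inner_exp hY hY' hYY' x, hFX' x, hFY' x]
    ring
  have ihA : Integrable (fun x => h1 x - (1/2) * h2 x) volume := ih1.sub (ih2.const_mul (1/2))
  have ihB : Integrable (fun x => (1/2) * h3 x) volume := ih3.const_mul (1/2)
  have ihC : Integrable (fun x => (1/2) * h2 x) volume := ih2.const_mul (1/2)
  calc ∫ x : ℝ, ((μ {ω | X ω ≤ x}).toReal - (μ {ω | Y ω ≤ x}).toReal) ^ 2
      = ∫ x : ℝ, (h1 x - (1/2) * h2 x - (1/2) * h3 x) :=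
        integral_congr_ae (Filter.Eventually.of_forall hpt)
    _ = (∫ x : ℝ, h1 x) - (1/2) * (∫ x : ℝ, h2 x) - (1/2) * (∫ x : ℝ, h3 x) := by
        rw [integral_sub ihA ihB, integral_sub ih1 ihC, integral_const_mul _ _, integral_const_mul _ _]
    _ = (∫ ω, |X ω - Y ω| ∂μ) - (1/2) * (∫ ω, |X ω - X' ω| ∂μ)
        - (1/2) * (∫ ω, |Y ω - Y' ω| ∂μ) := by
        rw [← exp_abs_eq hX hY hXint hYint, ← exp_abs_eq hX hX' hXint hX'int,
          ← exp_abs_eq hY hY' hYint hY'int]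
end

section
/- Let X, X' be i.i.d. nonnegative integrable random variables with CDF F and E(X) > 0. Then the Gini index G(X) = E|X - X'|/(2E(X)) equals 1 - (1/E(X))·∫_0^∞ (1 - F(x))² dx. -/
open MeasureTheory ProbabilityTheory Set

theorem gini_index_eq_one_sub_integral {Ω : Type*} [MeasurableSpace Ω]
    (μ : Measure Ω) [IsProbabilityMeasure μ]
    (X X' : Ω → ℝ) (hX : Measurable X) (hX' : Measurable X')
    (hXnn : ∀ ω, 0 ≤ X ω) (hX'nn : ∀ ω, 0 ≤ X' ω)
    (hXint : Integrable X μ)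
    (hid : IdentDistrib X X' μ μ) (hind : IndepFun X X' μ)
    (hEpos : 0 < ∫ ω, X ω ∂μ) :
    (∫ ω, |X ω - X' ω| ∂μ) / (2 * ∫ ω, X ω ∂μ) =
      1 - (1 / ∫ ω, X ω ∂μ) *
        ∫ x in Ioi (0 : ℝ), (1 - (μ {ω | X ω ≤ x}).toReal) ^ 2 := by
  have hX'int : Integrable X' μ := hid.integrable_iff.mp hXint
  have hmin_meas : Measurable (fun ω => min (X ω) (X' ω)) := hX.min hX'
  have hmin_int : Integrable (fun ω => min (X ω) (X' ω)) μ := by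
    refine hXint.mono hmin_meas.aestronglyMeasurable (Filter.Eventually.of_forall fun ω => ?_)
    rw [Real.norm_eq_abs, Real.norm_eq_abs, abs_of_nonneg (le_min (hXnn ω) (hX'nn ω)),
      abs_of_nonneg (hXnn ω)]
    exact min_le_left _ _
  -- |X - X'| = X + X' - 2 * min
  have habs : ∀ ω, |X ω - X' ω| = X ω + X' ω - 2 * min (X ω) (X' ω) := by
    intro ω
    rcases le_total (X ω) (X' ω) with h | h
    · rw [min_eq_left h, abs_of_nonpos (by linarith)]; ring
    · rw [min_eq_right h, abs_of_nonneg (by linarith)]; ring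
  have hintabs : (∫ ω, |X ω - X' ω| ∂μ) =
      (∫ ω, X ω ∂μ) + (∫ ω, X' ω ∂μ) - 2 * ∫ ω, min (X ω) (X' ω) ∂μ := by
    simp_rw [habs]
    have h1 : Integrable (fun ω => X ω + X' ω) μ := hXint.add hX'int
    rw [integral_sub h1 (hmin_int.const_mul 2), integral_add hXint hX'int,
      MeasureTheory.integral_const_mul]
  have hEX' : (∫ ω, X' ω ∂μ) = ∫ ω, X ω ∂μ := hid.integral_eq.symm
  -- layer cake for min
  have hlayer : (∫ ω, min (X ω) (X' ω) ∂μ) =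
      ∫ x in Ioi (0 : ℝ), (1 - (μ {ω | X ω ≤ x}).toReal) ^ 2 := by
    rw [hmin_int.integral_eq_integral_meas_lt
      (Filter.Eventually.of_forall fun ω => le_min (hXnn ω) (hX'nn ω))]
    refine setIntegral_congr_fun measurableSet_Ioi fun x _ => ?_
    have hset : {a | x < min (X a) (X' a)} = X ⁻¹' (Ioi x) ∩ X' ⁻¹' (Ioi x) := by
      ext a; simp [lt_min_iff]
    have hmul := hind.measure_inter_preimage_eq_mul (Ioi x) (Ioi x)
      measurableSet_Ioi measurableSet_Ioi
    have hEq : μ (X' ⁻¹' Ioi x) = μ (X ⁻¹' Ioi x) :=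
      (hid.measure_mem_eq measurableSet_Ioi).symm
    have hsplit : (μ (X ⁻¹' Ioi x)).toReal = 1 - (μ {ω | X ω ≤ x}).toReal := by
      have hc : X ⁻¹' Ioi x = {ω | X ω ≤ x}ᶜ := by ext ω; simp [not_le]
      rw [hc, measure_compl (measurableSet_le hX measurable_const)
        (measure_ne_top μ _), measure_univ,
        ENNReal.toReal_sub_of_le prob_le_one (by simp)]
      simp
    rw [hset, measureReal_def, hmul, hEq, ENNReal.toReal_mul, hsplit]
    ring
  rw [hintabs, hEX', hlayer.symm]
  field_simp
  ring
end
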